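/- If n is even (so FQ_n contains an odd cycle), then every shortest odd cycle of FQ_n contains exactly one complementary edge and has length n+1. -/

import Mathlib

/-- The `n`-dimensional folded hypercube: vertices are binary strings of length `n`,
adjacent iff they differ in exactly one coordinate or in all coordinates. -/
def foldedCube (n : ℕ) : SimpleGraph (Fin n → Bool) :=
  SimpleGraph.fromRel (fun u v =>
    (Finset.univ.filter (fun i => u i ≠ v i)).card = 1 ∨ ∀ i, u i ≠ v i)

/-- External neighbourhood of a vertex set. -/
def extNbhd {V : Type*} (G : SimpleGraph V) (S : Set V) : Set V :=
  {w | w ∉ S ∧ ∃ v ∈ S, G.Adj v w}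

/-- An edge is complementary if its endpoints differ in all coordinates. -/
def IsCompEdge (n : ℕ) (e : Sym2 (Fin n → Bool)) : Prop :=
  ∀ u ∈ e, ∀ v ∈ e, u ≠ v → ∀ i, u i ≠ v i

namespace FoldedAux

open SimpleGraph

variable {n : ℕ}

/-- number of differing coordinates -/
def dc (u v : Fin n → Bool) : ℕ := (Finset.univ.filter (fun i => u i ≠ v i)).card

lemma dc_comm (u v : Fin n → Bool) : dc u v = dc v u := by
  unfold dc
  congr 1
  apply Finset.filter_congr
  intro i _
  simp [ne_comm]

lemma dc_eq_n_iff {u v : Fin n → Bool} : dc u v = n ↔ ∀ i, u i ≠ v i := by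
  unfold dc
  constructor
  · intro h i
    have huniv : Finset.univ.filter (fun i => u i ≠ v i) = Finset.univ := by
      apply Finset.eq_univ_of_card
      rw [h, Fintype.card_fin]
    have : i ∈ Finset.univ.filter (fun i => u i ≠ v i) := by
      rw [huniv]; exact Finset.mem_univ i
    exact (Finset.mem_filter.mp this).2
  · intro h
    rw [Finset.filter_true_of_mem (fun i _ => h i)]
    simp

lemma adj_iff {u v : Fin n → Bool} :
    (foldedCube n).Adj u v ↔ u ≠ v ∧ (dc u v = 1 ∨ dc u v = n) := by
  rw [foldedCube, SimpleGraph.fromRel_adj]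
  constructor
  · rintro ⟨hne, h | h⟩
    · refine ⟨hne, ?_⟩
      rcases h with h | h
      · left; exact h
      · right; exact dc_eq_n_iff.mpr h
    · refine ⟨hne, ?_⟩
      rcases h with h | h
      · left; rw [dc_comm] at *; exact h
      · right; exact dc_eq_n_iff.mpr (fun i => (h i).symm ∘ Eq.symm ∘ id ∘ Eq.symm)
  · rintro ⟨hne, h | h⟩
    · exact ⟨hne, Or.inl (Or.inl h)⟩
    · exact ⟨hne, Or.inl (Or.inr (dc_eq_n_iff.mp h))⟩

/-- dart flips coordinate i -/
def flip (i : Fin n) (d : (foldedCube n).Dart) : Bool := d.toProd.1 i != d.toProd.2 i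

lemma parity_countP {u v : Fin n → Bool} (p : (foldedCube n).Walk u v) (i : Fin n) :
    Even (p.darts.countP (flip i)) ↔ u i = v i := by
  induction p with
  | nil => simp
  | @cons a b w h q ih =>
    rw [SimpleGraph.Walk.darts_cons, List.countP_cons]
    by_cases hab : a i = b i
    · have hf : flip i ⟨(a, b), h⟩ = false := by simp [flip, hab]
      rw [hf]
      simp only [Bool.false_eq_true, if_false, Nat.add_zero]
      rw [ih, hab]
    · have hf : flip i ⟨(a, b), h⟩ = true := by
        simp [flip, bne_iff_ne, hab]
      rw [hf, if_pos rfl, Nat.even_add_one, ih]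
      cases ha : a i <;> cases hb : b i <;> cases hw : w i <;> simp_all

lemma sum_dc_eq (l : List ((foldedCube n).Dart)) :
    (l.map (fun d => dc d.toProd.1 d.toProd.2)).sum = ∑ i, l.countP (flip i) := by
  induction l with
  | nil => simp
  | cons d l ih =>
    have hd : dc d.toProd.1 d.toProd.2 = ∑ i : Fin n, if flip i d = true then 1 else 0 := by
      rw [dc, Finset.card_filter]
      apply Finset.sum_congr rfl
      intro i _
      by_cases h : d.toProd.1 i = d.toProd.2 i <;> simp [flip, h]
    simp only [List.map_cons, List.sum_cons, List.countP_cons, ih, Finset.sum_add_distrib, hd]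
    exact Nat.add_comm _ _

/-- hyper predicate -/
def pH (d : (foldedCube n).Dart) : Bool := dc d.toProd.1 d.toProd.2 == 1
/-- comp predicate -/
def pC (d : (foldedCube n).Dart) : Bool := dc d.toProd.1 d.toProd.2 == n

lemma dart_cases (hn1 : n ≠ 1) (d : (foldedCube n).Dart) :
    (pH d = true ∧ pC d = false ∧ dc d.toProd.1 d.toProd.2 = 1) ∨
    (pH d = false ∧ pC d = true ∧ dc d.toProd.1 d.toProd.2 = n) := by
  have := (adj_iff.mp d.adj).2
  rcases this with h | h
  · left
    refine ⟨by simp [pH, h], by simp [pC, h]; omega, h⟩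
  · right
    refine ⟨by simp [pH, h]; omega, by simp [pC, h], h⟩

lemma sum_dc_split (hn1 : n ≠ 1) (l : List ((foldedCube n).Dart)) :
    (l.map (fun d => dc d.toProd.1 d.toProd.2)).sum = l.countP pH + n * l.countP pC := by
  induction l with
  | nil => simp
  | cons d l ih =>
    simp only [List.map_cons, List.sum_cons, List.countP_cons, ih]
    rcases dart_cases hn1 d with ⟨h1, h2, h3⟩ | ⟨h1, h2, h3⟩ <;>
      simp [h1, h2, h3] <;> ring

lemma count_split (hn1 : n ≠ 1) (l : List ((foldedCube n).Dart)) :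
    l.countP pH + l.countP pC = l.length := by
  induction l with
  | nil => simp
  | cons d l ih =>
    simp only [List.countP_cons, List.length_cons]
    rcases dart_cases hn1 d with ⟨h1, h2, h3⟩ | ⟨h1, h2, h3⟩ <;> simp [h1, h2] <;> omega

/-- key lower bound for any closed odd walk, n even, n ≥ 2 -/
lemma lower_bound (hn : Even n) (hn2 : 2 ≤ n) {u : Fin n → Bool}
    (c : (foldedCube n).Walk u u) (hodd : Odd c.length) :
    Odd (c.darts.countP pC) ∧ n + c.darts.countP pC ≤ c.length := by
  have hn1 : n ≠ 1 := by omega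
  set L := c.darts with hL
  set comp := L.countP pC with hcomp
  set hyper := L.countP pH with hhyper
  have hlen : L.length = c.length := SimpleGraph.Walk.length_darts c
  have hSeven : ∀ i : Fin n, Even (L.countP (flip i)) := fun i =>
    (parity_countP c i).mpr rfl
  have hT1 : (L.map (fun d => dc d.toProd.1 d.toProd.2)).sum = ∑ i, L.countP (flip i) :=
    sum_dc_eq L
  have hT2 : (L.map (fun d => dc d.toProd.1 d.toProd.2)).sum = hyper + n * comp :=
    sum_dc_split hn1 L
  have hTeven : Even (∑ i, L.countP (flip i)) :=
    Finset.even_sum _ (fun i _ => hSeven i)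
  have hhypereven : Even hyper := by
    rw [hT1] at hT2
    have hnc : Even (n * comp) := hn.mul_right comp
    rcases hTeven with ⟨a, ha⟩
    rcases hnc with ⟨b, hb⟩
    rw [Nat.even_iff]
    omega
  have hsum : hyper + comp = c.length := by rw [← hlen]; exact count_split hn1 L
  have hcompodd : Odd comp := by
    rcases hhypereven with ⟨a, ha⟩
    rcases hodd with ⟨b, hb⟩
    rw [Nat.odd_iff]
    omega
  refine ⟨hcompodd, ?_⟩
  -- each coordinate count at least comp + 1
  have hge : ∀ i : Fin n, comp + 1 ≤ L.countP (flip i) := by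
    intro i
    have hmono : comp ≤ L.countP (flip i) := by
      apply List.countP_mono_left
      intro d _ hd
      have : dc d.toProd.1 d.toProd.2 = n := by simpa [pC] using hd
      have := dc_eq_n_iff.mp this i
      simpa [flip, bne_iff_ne] using this
    have h1 := hSeven i
    rcases h1 with ⟨a, ha⟩
    rcases hcompodd with ⟨b, hb⟩
    omega
  have hTlow : n * (comp + 1) ≤ ∑ i, L.countP (flip i) := by
    calc n * (comp + 1) = ∑ _i : Fin n, (comp + 1) := by
          simp [Finset.sum_const, Finset.card_univ, Nat.mul_comm]
      _ ≤ ∑ i, L.countP (flip i) := Finset.sum_le_sum (fun i _ => hge i)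
  rw [hT1] at hT2
  have hmul : n * (comp + 1) = n * comp + n := by ring
  linarith

/-! ### construction of a short odd cycle -/

/-- the j-th vertex on the canonical path -/
def vtx (n j : ℕ) : Fin n → Bool := fun i => decide (i.val < j)

lemma vtx_inj {j k : ℕ} (hj : j ≤ n) (hk : k ≤ n) (h : vtx n j = vtx n k) : j = k := by
  by_contra hne
  rcases Nat.lt_or_ge j k with hlt | hge
  · have := congrFun h ⟨j, by omega⟩
    simp [vtx] at this
    omega
  · have hlt : k < j := by omega
    have := congrFun h ⟨k, by omega⟩
    simp [vtx] at this
    omega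

lemma adj_step {j : ℕ} (hj : j < n) : (foldedCube n).Adj (vtx n j) (vtx n (j + 1)) := by
  rw [adj_iff]
  constructor
  · intro h
    have := congrFun h ⟨j, hj⟩
    simp [vtx] at this
  · left
    rw [dc]
    have : (Finset.univ.filter (fun i : Fin n => vtx n j i ≠ vtx n (j+1) i)) = {⟨j, hj⟩} := by
      ext i
      simp only [Finset.mem_filter, Finset.mem_univ, true_and, Finset.mem_singleton, vtx]
      constructor
      · intro h
        have : ¬ (i.val < j ↔ i.val < j + 1) := by
          intro hiff
          apply (Finset.mem_filter.mp h).2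
          simp [decide_eq_decide.mpr hiff]
        have : i.val = j := by omega
        exact Fin.ext this
      · intro h
        subst h
        simp
    rw [this]
    simp

/-- canonical path from `vtx n j` to `vtx n n` with `j + k = n`; length `k`. -/
def pw : (k : ℕ) → (j : ℕ) → (h : j + k = n) → (foldedCube n).Walk (vtx n j) (vtx n n)
  | 0, j, h => SimpleGraph.Walk.nil.copy (by rw [show j = n by omega]) rfl
  | (k+1), j, h =>
      SimpleGraph.Walk.cons (adj_step (by omega)) (pw k (j+1) (by omega))

lemma pw_length (k j : ℕ) (h : j + k = n) : (pw k j h).length = k := by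
  induction k generalizing j with
  | zero => simp [pw]
  | succ k ih => simp [pw, ih]

lemma pw_support (k j : ℕ) (h : j + k = n) :
    ∀ x ∈ (pw k j h).support, ∃ m, j ≤ m ∧ m ≤ n ∧ x = vtx n m := by
  induction k generalizing j with
  | zero =>
    intro x hx
    simp [pw] at hx
    exact ⟨n, by omega, le_refl n, hx⟩
  | succ k ih =>
    intro x hx
    rw [pw, SimpleGraph.Walk.support_cons] at hx
    rcases List.mem_cons.mp hx with hx | hx
    · exact ⟨j, le_refl j, by omega, hx⟩
    · rcases ih (j+1) (by omega) x hx with ⟨m, hm1, hm2, hm3⟩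
      exact ⟨m, by omega, hm2, hm3⟩

lemma pw_isPath (k j : ℕ) (h : j + k = n) : (pw k j h).IsPath := by
  induction k generalizing j with
  | zero => simp [pw]
  | succ k ih =>
    rw [pw, SimpleGraph.Walk.cons_isPath_iff]
    refine ⟨ih (j+1) (by omega), ?_⟩
    intro hmem
    rcases pw_support k (j+1) (by omega) _ hmem with ⟨m, hm1, hm2, hm3⟩
    have := vtx_inj (n := n) (by omega) hm2 hm3
    omega

lemma pw_edges (hn2 : 2 ≤ n) (k j : ℕ) (h : j + k = n) :
    ∀ e ∈ (pw k j h).edges, ¬ IsCompEdge n e := by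
  induction k generalizing j with
  | zero => intro e he; simp [pw] at he
  | succ k ih =>
    intro e he
    rw [pw, SimpleGraph.Walk.edges_cons] at he
    rcases List.mem_cons.mp he with he | he
    · subst he
      intro hcomp
      have hne : vtx n j ≠ vtx n (j+1) := fun hcon => by
        have := vtx_inj (n := n) (by omega) (by omega) hcon; omega
      have hall := hcomp (vtx n j) (by simp) (vtx n (j+1)) (by simp) hne
      -- find a coordinate where they agree
      by_cases hj0 : j = 0
      · subst hj0
        have := hall ⟨1, by omega⟩
        simp [vtx] at this
      · have := hall ⟨0, by omega⟩
        simp [vtx] at this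
        omega
    · exact ih (j+1) (by omega) e he

lemma adj_ends (hn2 : 2 ≤ n) : (foldedCube n).Adj (vtx n 0) (vtx n n) := by
  rw [adj_iff]
  have hall : ∀ i : Fin n, vtx n 0 i ≠ vtx n n i := by
    intro i
    simp [vtx, i.isLt]
  constructor
  · intro h
    exact hall ⟨0, by omega⟩ (congrFun h _)
  · right
    exact dc_eq_n_iff.mpr hall

lemma comp_ends (hn2 : 2 ≤ n) : IsCompEdge n s(vtx n 0, vtx n n) := by
  intro a ha b hb hab i
  rw [Sym2.mem_iff] at ha hb
  have hall : ∀ i : Fin n, vtx n 0 i ≠ vtx n n i := by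
    intro i
    simp [vtx, i.isLt]
  rcases ha with ha | ha <;> rcases hb with hb | hb <;> subst ha <;> subst hb
  · exact absurd rfl hab
  · exact hall i
  · exact (hall i).symm ∘ Eq.symm ∘ id ∘ Eq.symm
  · exact absurd rfl hab

/-- the canonical odd cycle of length n+1 -/
def shortCycle (hn2 : 2 ≤ n) : (foldedCube n).Walk (vtx n 0) (vtx n 0) :=
  SimpleGraph.Walk.cons (adj_ends hn2) (pw n 0 (by omega)).reverse

lemma shortCycle_length (hn2 : 2 ≤ n) : (shortCycle hn2).length = n + 1 := by
  rw [shortCycle, SimpleGraph.Walk.length_cons, SimpleGraph.Walk.length_reverse,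
    pw_length]

lemma shortCycle_isCycle (hn2 : 2 ≤ n) : (shortCycle hn2).IsCycle := by
  rw [shortCycle, SimpleGraph.Walk.cons_isCycle_iff]
  constructor
  · exact (pw_isPath n 0 (by omega)).reverse
  · intro hmem
    rw [SimpleGraph.Walk.edges_reverse, List.mem_reverse] at hmem
    exact pw_edges hn2 n 0 (by omega) _ hmem (comp_ends hn2)

end FoldedAux

theorem stmt6 (n : ℕ) (hn : Even n) (u : Fin n → Bool)
    (c : (foldedCube n).Walk u u) (hc : c.IsCycle) (hodd : Odd c.length)
    (hmin : ∀ (v : Fin n → Bool) (c' : (foldedCube n).Walk v v),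
      c'.IsCycle → Odd c'.length → c.length ≤ c'.length) :
    c.length = n + 1 ∧ ∃! e : Sym2 (Fin n → Bool), e ∈ c.edges ∧ IsCompEdge n e := by
  classical
  -- first, n ≥ 2
  have hn2 : 2 ≤ n := by
    by_contra h
    have hn0 : n = 0 := by
      rcases hn with ⟨m, hm⟩
      omega
    subst hn0
    have h3 : 3 ≤ c.length := hc.three_le_length
    have hd : c.darts ≠ [] := by
      intro hnil
      have := SimpleGraph.Walk.length_darts c
      rw [hnil] at this
      simp at this
      omega
    rcases List.exists_mem_of_ne_nil _ hd with ⟨d, hdmem⟩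
    have hadj := d.adj
    have : d.toProd.1 = d.toProd.2 := funext (fun i => absurd i.isLt (by omega))
    exact hadj.ne this
  -- upper bound from the constructed cycle
  have hupper : c.length ≤ n + 1 := by
    have := hmin _ (FoldedAux.shortCycle hn2) (FoldedAux.shortCycle_isCycle hn2)
      (by rw [FoldedAux.shortCycle_length]; exact hn.add_one)
    rwa [FoldedAux.shortCycle_length hn2] at this
  -- lower bound
  obtain ⟨hcompodd, hlow⟩ := FoldedAux.lower_bound hn hn2 c hodd
  set comp := c.darts.countP FoldedAux.pC with hcompdef
  have hcomp1 : comp = 1 := by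
    rcases hcompodd with ⟨b, hb⟩
    omega
  have hlen : c.length = n + 1 := by omega
  refine ⟨hlen, ?_⟩
  -- relate dart count to edge count
  have hcount : c.edges.countP (fun e => decide (IsCompEdge n e)) = 1 := by
    rw [SimpleGraph.Walk.edges, List.countP_map, ← hcomp1, hcompdef]
    apply List.countP_congr
    intro d _
    simp only [Function.comp_apply, decide_eq_true_eq, FoldedAux.pC, beq_iff_eq]
    constructor
    · intro h
      apply FoldedAux.dc_eq_n_iff.mpr
      exact h d.toProd.1 (Sym2.mem_mk_left _ _) d.toProd.2
        (Sym2.mem_mk_right _ _) d.adj.ne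
    · intro h
      have hall := FoldedAux.dc_eq_n_iff.mp h
      intro a ha b hb hab i
      rw [SimpleGraph.Dart.edge, Sym2.mem_iff] at ha hb
      rcases ha with ha | ha <;> rcases hb with hb | hb <;> subst ha <;> subst hb
      · exact absurd rfl hab
      · exact hall i
      · exact fun hcon => hall i hcon.symm
      · exact absurd rfl hab
  rw [List.countP_eq_length_filter] at hcount
  rcases List.length_eq_one_iff.mp hcount with ⟨e₀, he₀⟩
  have hmem : e₀ ∈ c.edges ∧ IsCompEdge n e₀ := by
    have : e₀ ∈ c.edges.filter (fun e => decide (IsCompEdge n e)) := by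
      rw [he₀]; simp
    rw [List.mem_filter] at this
    exact ⟨this.1, by simpa using this.2⟩
  refine ⟨e₀, hmem, ?_⟩
  intro e' he'
  have : e' ∈ c.edges.filter (fun e => decide (IsCompEdge n e)) := by
    rw [List.mem_filter]
    exact ⟨he'.1, by simpa using he'.2⟩
  rw [he₀] at this
  simpa using this
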